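/- For every integer n ≥ 0: | ∫_{(2n+1)/2}^{(2n+3)/2} sin(2πy)/y dy | ≤ 4/(π·(2n+1)·(2n+3)). -/
import Mathlib

open Real intervalIntegral

private lemma sin2pi_int (p q : ℝ) :
    ∫ y in p..q, Real.sin (2 * Real.pi * y)
      = (Real.cos (2 * Real.pi * p) - Real.cos (2 * Real.pi * q)) / (2 * Real.pi) := by
  have h : (2 * Real.pi) ≠ 0 := by positivity
  have := intervalIntegral.integral_comp_mul_left (fun x => Real.sin x) h (a := p) (b := q)
  simp only [smul_eq_mul] at this
  rw [this, integral_sin]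
  field_simp

private lemma sin_nonpos_aux {t : ℝ} (h1 : Real.pi ≤ t) (h2 : t ≤ 2 * Real.pi) :
    Real.sin t ≤ 0 := by
  have h : Real.sin (t - Real.pi) = -Real.sin t := Real.sin_sub_pi t
  have hn : 0 ≤ Real.sin (t - Real.pi) :=
    Real.sin_nonneg_of_nonneg_of_le_pi (by linarith) (by linarith)
  linarith [h ▸ hn]

theorem stmt13 (n : ℕ) :
    |∫ y in (((2 * (n : ℝ) + 1) / 2))..((2 * (n : ℝ) + 3) / 2),
        Real.sin (2 * Real.pi * y) / y|
      ≤ 4 / (Real.pi * (2 * (n : ℝ) + 1) * (2 * (n : ℝ) + 3)) := by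
  have pi_pos := Real.pi_pos
  set a : ℝ := (2 * (n : ℝ) + 1) / 2 with ha
  set m : ℝ := (n : ℝ) + 1 with hm
  set b : ℝ := (2 * (n : ℝ) + 3) / 2 with hb
  have hn0 : (0:ℝ) ≤ (n : ℝ) := Nat.cast_nonneg n
  have hapos : 0 < a := by rw [ha]; linarith
  have hmpos : 0 < m := by rw [hm]; linarith
  have hbpos : 0 < b := by rw [hb]; linarith
  have ham : a ≤ m := by rw [ha, hm]; linarith
  have hmb : m ≤ b := by rw [hm, hb]; linarith
  -- cosine values at the endpoints
  have hcosa : Real.cos (2 * Real.pi * a) = -1 := by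
    rw [show 2 * Real.pi * a = Real.pi + (((n : ℤ) : ℤ) : ℝ) * (2 * Real.pi) by
      push_cast; rw [ha]; ring]
    rw [Real.cos_add_int_mul_two_pi, Real.cos_pi]
  have hcosm : Real.cos (2 * Real.pi * m) = 1 := by
    rw [show 2 * Real.pi * m = 0 + ((((n : ℤ) + 1) : ℤ) : ℝ) * (2 * Real.pi) by
      push_cast; rw [hm]; ring]
    rw [Real.cos_add_int_mul_two_pi, Real.cos_zero]
  have hcosb : Real.cos (2 * Real.pi * b) = -1 := by
    rw [show 2 * Real.pi * b = Real.pi + ((((n : ℤ) + 1) : ℤ) : ℝ) * (2 * Real.pi) by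
      push_cast; rw [hb]; ring]
    rw [Real.cos_add_int_mul_two_pi, Real.cos_pi]
  -- signs of sin on the two halves
  have hsin_neg : ∀ y ∈ Set.Icc a m, Real.sin (2 * Real.pi * y) ≤ 0 := by
    intro y hy
    obtain ⟨hya, hym⟩ := hy
    rw [ha] at hya; rw [hm] at hym
    rw [← Real.sin_add_int_mul_two_pi (2 * Real.pi * y) (-(n : ℤ))]
    apply sin_nonpos_aux
    · push_cast; nlinarith
    · push_cast; nlinarith
  have hsin_pos : ∀ y ∈ Set.Icc m b, 0 ≤ Real.sin (2 * Real.pi * y) := by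
    intro y hy
    obtain ⟨hym, hyb⟩ := hy
    rw [hm] at hym; rw [hb] at hyb
    rw [← Real.sin_add_int_mul_two_pi (2 * Real.pi * y) (-((n : ℤ) + 1))]
    apply Real.sin_nonneg_of_nonneg_of_le_pi
    · push_cast; nlinarith
    · push_cast; nlinarith
  -- integrability
  have hint : ∀ p q : ℝ, 0 < p → p ≤ q →
      IntervalIntegrable (fun y => Real.sin (2 * Real.pi * y) / y) MeasureTheory.volume p q := by
    intro p q hp hpq
    apply ContinuousOn.intervalIntegrable
    apply ContinuousOn.div
    · exact (Real.continuous_sin.comp (continuous_const.mul continuous_id)).continuousOn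
    · exact continuousOn_id
    · intro x hx
      rw [Set.uIcc_of_le hpq] at hx
      exact ne_of_gt (lt_of_lt_of_le hp hx.1)
  have hintc : ∀ (c p q : ℝ),
      IntervalIntegrable (fun y => Real.sin (2 * Real.pi * y) / c) MeasureTheory.volume p q := by
    intro c p q
    apply Continuous.intervalIntegrable
    exact (Real.continuous_sin.comp (continuous_const.mul continuous_id)).div_const c
  have hconst_int : ∀ (c p q : ℝ),
      ∫ y in p..q, Real.sin (2 * Real.pi * y) / c
        = (Real.cos (2 * Real.pi * p) - Real.cos (2 * Real.pi * q)) / (2 * Real.pi) / c := by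
    intro c p q
    rw [intervalIntegral.integral_div, sin2pi_int]
  set I1 : ℝ := ∫ y in a..m, Real.sin (2 * Real.pi * y) / y with hI1
  set I2 : ℝ := ∫ y in m..b, Real.sin (2 * Real.pi * y) / y with hI2
  -- four comparison bounds
  have hI1lo : -(1 / (Real.pi * a)) ≤ I1 := by
    have hmono := intervalIntegral.integral_mono_on ham (hintc a a m) (hint a m hapos ham) ?_
    · rw [hconst_int a a m, hcosa, hcosm] at hmono
      calc -(1 / (Real.pi * a)) = (-1 - 1) / (2 * Real.pi) / a := by
            field_simp; ring
        _ ≤ I1 := hmono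
    · intro y hy
      have hya : a ≤ y := hy.1
      have hyp : 0 < y := lt_of_lt_of_le hapos hya
      have hs := hsin_neg y hy
      rw [div_eq_mul_inv, div_eq_mul_inv]
      exact mul_le_mul_of_nonpos_left (by gcongr) hs
  have hI1hi : I1 ≤ -(1 / (Real.pi * m)) := by
    have hmono := intervalIntegral.integral_mono_on ham (hint a m hapos ham) (hintc m a m) ?_
    · rw [hconst_int m a m, hcosa, hcosm] at hmono
      calc I1 ≤ (-1 - 1) / (2 * Real.pi) / m := hmono
        _ = -(1 / (Real.pi * m)) := by field_simp; ring
    · intro y hy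
      have hyp : 0 < y := lt_of_lt_of_le hapos hy.1
      have hym : y ≤ m := hy.2
      have hs := hsin_neg y hy
      rw [div_eq_mul_inv, div_eq_mul_inv]
      exact mul_le_mul_of_nonpos_left (by gcongr) hs
  have hI2lo : 1 / (Real.pi * b) ≤ I2 := by
    have hmono := intervalIntegral.integral_mono_on hmb (hintc b m b) (hint m b hmpos hmb) ?_
    · rw [hconst_int b m b, hcosm, hcosb] at hmono
      calc 1 / (Real.pi * b) = (1 - -1) / (2 * Real.pi) / b := by field_simp; ring
        _ ≤ I2 := hmono
    · intro y hy
      have hyp : 0 < y := lt_of_lt_of_le hmpos hy.1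
      have hyb : y ≤ b := hy.2
      have hs := hsin_pos y hy
      rw [div_eq_mul_inv, div_eq_mul_inv]
      exact mul_le_mul_of_nonneg_left (by gcongr) hs
  have hI2hi : I2 ≤ 1 / (Real.pi * m) := by
    have hmono := intervalIntegral.integral_mono_on hmb (hint m b hmpos hmb) (hintc m m b) ?_
    · rw [hconst_int m m b, hcosm, hcosb] at hmono
      calc I2 ≤ (1 - -1) / (2 * Real.pi) / m := hmono
        _ = 1 / (Real.pi * m) := by field_simp; ring
    · intro y hy
      have hym : m ≤ y := hy.1
      have hyp : 0 < y := lt_of_lt_of_le hmpos hym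
      have hs := hsin_pos y hy
      rw [div_eq_mul_inv, div_eq_mul_inv]
      exact mul_le_mul_of_nonneg_left (by gcongr) hs
  -- combine
  have hsplit : (∫ y in a..b, Real.sin (2 * Real.pi * y) / y) = I1 + I2 :=
    (intervalIntegral.integral_add_adjacent_intervals
      (hint a m hapos ham) (hint m b hmpos hmb)).symm
  rw [hsplit]
  have hRHS : 4 / (Real.pi * (2 * (n : ℝ) + 1) * (2 * (n : ℝ) + 3))
      = 1 / (Real.pi * a) - 1 / (Real.pi * b) := by
    rw [ha, hb]
    have h1 : (2 * (n : ℝ) + 1) ≠ 0 := by linarith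
    have h3 : (2 * (n : ℝ) + 3) ≠ 0 := by linarith
    field_simp
    ring
  rw [abs_le, hRHS]
  constructor
  · linarith
  · linarith [one_div_pos.mpr (mul_pos pi_pos hbpos), one_div_pos.mpr (mul_pos pi_pos hapos)]
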